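/- arXiv:2106.05938 — 2 statements merged into one kernel-verified Lean document; each statement's English description precedes it below -/
import Mathlib

section
/- Let d, L, K be positive integers. For each k ∈ {1,…,K} and l ∈ {1,…,L}, let Φ_{l,k} be a generalised quantum operation on d×d complex matrices and let α̃_k ∈ ℂ. Define the operator X = Σ_{k=1}^{K} α̃_k ⊗_{l=1}^{L} (Φ_{l,k} ⊗ id)(φ) acting on ⊗_{l=1}^{L}(ℂ^d ⊗ ℂ^d), where each Φ_{l,k} acts on the l-th primary factor and id acts on its copy, and φ is the maximally entangled state on ℂ^d ⊗ ℂ^d. Then Σ_{k=1}^{K} |α̃_k| ≥ max_{1≤l≤L} ‖R_l(X)‖₁, where R_l(X) is the l-th realignment of X and ‖·‖₁ is the trace norm. -/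
open Matrix
open scoped Kronecker ComplexOrder

/-- Partial trace over the second (ancilla) tensor factor. -/
noncomputable def ptraceE {ι κ : Type*} [Fintype κ] (X : Matrix (ι × κ) (ι × κ) ℂ) : Matrix ι ι ℂ :=
  Matrix.of fun i j => ∑ k, X (i, k) (j, k)

/-- A generalised quantum operation `Φ(ρ) = Tr_E[U (ρ ⊗ |e⟩⟨e|) V†]`. -/
def IsGQO {ι : Type*} [Fintype ι] [DecidableEq ι]
    (Φ : Matrix ι ι ℂ → Matrix ι ι ℂ) : Prop :=
  ∃ (dE : ℕ) (e : Fin dE → ℂ) (U V : Matrix (ι × Fin dE) (ι × Fin dE) ℂ),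
    star e ⬝ᵥ e = 1 ∧
    U ∈ Matrix.unitaryGroup (ι × Fin dE) ℂ ∧
    V ∈ Matrix.unitaryGroup (ι × Fin dE) ℂ ∧
    ∀ ρ, Φ ρ = ptraceE (U * (ρ ⊗ₖ Matrix.vecMulVec e (star e)) * Vᴴ)

/-- The square root of a positive semidefinite matrix, as `Matrix.PosSemidef.sqrt` was defined
in the older Mathlib. -/
noncomputable def Matrix.PosSemidef.sqrt {n : Type*} [Fintype n] [DecidableEq n]
    {A : Matrix n n ℂ} (hA : A.PosSemidef) : Matrix n n ℂ :=
  hA.1.eigenvectorUnitary.1 * diagonal ((↑) ∘ (Real.sqrt) ∘ hA.1.eigenvalues) *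
    (star hA.1.eigenvectorUnitary : Matrix n n ℂ)

/-- The trace norm `‖M‖₁ = Tr √(M Mᴴ)`. -/
noncomputable def traceNorm {m n : Type*} [Fintype m] [Fintype n] [DecidableEq m]
    (M : Matrix m n ℂ) : ℝ :=
  ((Matrix.posSemidef_self_mul_conjTranspose M).sqrt.trace).re

/-- `(Φ ⊗ id)` applied to the maximally entangled state. -/
noncomputable def choiHalf {ι : Type*} [Fintype ι] [DecidableEq ι]
    (Φ : Matrix ι ι ℂ → Matrix ι ι ℂ) : Matrix (ι × ι) (ι × ι) ℂ :=
  Matrix.of fun p q =>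
    ((Fintype.card ι : ℂ))⁻¹ * Φ (Matrix.single p.2 q.2 1) p.1 q.1

/-- The `l`-th realignment of an operator on `⊗_{m} (ℂ^d ⊗ ℂ^d)`. -/
def realign {ι : Type*} {L : ℕ} (X : Matrix (Fin L → ι × ι) (Fin L → ι × ι) ℂ) (l : Fin L) :
    Matrix ((ι × ι) × (ι × ι)) ({ m : Fin L // m ≠ l } → (ι × ι) × (ι × ι)) ℂ :=
  Matrix.of fun r g =>
    X (fun m => if h : m = l then r.1 else (g ⟨m, h⟩).1)
      (fun m => if h : m = l then r.2 else (g ⟨m, h⟩).2)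


open Complex in
lemma gqo_entry {ι : Type*} [Fintype ι] [DecidableEq ι] {dE : ℕ} (e : Fin dE → ℂ)
    (U V : Matrix (ι × Fin dE) (ι × Fin dE) ℂ)
    (i j a b : ι) :
    ptraceE (U * ((Matrix.single a b 1) ⊗ₖ Matrix.vecMulVec e (star e)) * Vᴴ) i j
      = ∑ k : Fin dE, (∑ s, U (i, k) (a, s) * e s) * (starRingEnd ℂ) (∑ s, V (j, k) (b, s) * e s) := by
  unfold ptraceE
  rw [Matrix.of_apply]
  refine Finset.sum_congr rfl fun k _ => ?_
  simp only [Matrix.mul_apply, Matrix.conjTranspose_apply, Matrix.kroneckerMap_apply,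
    Matrix.vecMulVec_apply, Matrix.single, Matrix.of_apply, Fintype.sum_prod_type,
    ite_and, ite_mul, mul_ite, zero_mul, mul_zero, one_mul, mul_one,
    Finset.sum_ite_irrel, Finset.sum_ite_eq, Finset.sum_ite_eq', Finset.sum_const_zero,
    Pi.star_apply, RCLike.star_def]
  simp only [Finset.mem_univ, if_true, map_sum, _root_.map_mul, Finset.mul_sum]
  refine Finset.sum_congr rfl fun x _ => ?_
  rw [Finset.sum_mul, Finset.sum_mul]
  exact Finset.sum_congr rfl fun x1 _ => by ring

lemma cs_abs' {ι : Type*} [Fintype ι] (x y : ι → ℂ) :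
    ‖∑ i, x i * y i‖ ≤
      Real.sqrt (∑ i, Complex.normSq (x i)) * Real.sqrt (∑ i, Complex.normSq (y i)) := by
  calc ‖∑ i, x i * y i‖ ≤ ∑ i, ‖x i * y i‖ :=
        (norm_sum_le _ _)
    _ = ∑ i, ‖x i‖ * ‖y i‖ := by simp [norm_mul]
    _ ≤ _ := by
        have h := Real.sum_mul_le_sqrt_mul_sqrt Finset.univ
          (fun i => ‖x i‖) (fun i => ‖y i‖)
        simpa [Complex.sq_norm] using h

lemma nsq_sum_le {ι : Type*} [Fintype ι] (x y : ι → ℂ) :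
    Complex.normSq (∑ i, x i * y i) ≤
      (∑ i, Complex.normSq (x i)) * (∑ i, Complex.normSq (y i)) := by
  rw [← Complex.sq_norm]
  calc (‖∑ i, x i * y i‖)^2
      ≤ (Real.sqrt (∑ i, Complex.normSq (x i)) * Real.sqrt (∑ i, Complex.normSq (y i)))^2 :=
        pow_le_pow_left₀ (norm_nonneg _) (cs_abs' x y) 2
    _ = _ := by
        rw [mul_pow, Real.sq_sqrt (Finset.sum_nonneg fun i _ => Complex.normSq_nonneg _),
          Real.sq_sqrt (Finset.sum_nonneg fun i _ => Complex.normSq_nonneg _)]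

lemma unit_cols {ι : Type*} [Fintype ι] [DecidableEq ι] {dE : ℕ} (e : Fin dE → ℂ)
    (he : star e ⬝ᵥ e = 1) {U : Matrix (ι × Fin dE) (ι × Fin dE) ℂ}
    (hU : U ∈ Matrix.unitaryGroup (ι × Fin dE) ℂ) (a : ι) :
    ∑ x : ι × Fin dE, Complex.normSq (∑ s, U x (a, s) * e s) = 1 := by
  have hU' : star U * U = 1 := (Matrix.mem_unitaryGroup_iff').mp hU
  have horth : ∀ s s' : Fin dE,
      (∑ x, (starRingEnd ℂ) (U x (a, s)) * U x (a, s')) = if s = s' then 1 else 0 := by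
    intro s s'
    have h1 : (star U * U) (a, s) (a, s') = (1 : Matrix (ι × Fin dE) (ι × Fin dE) ℂ) (a, s) (a, s') := by
      rw [hU']
    rw [Matrix.mul_apply] at h1
    simp only [Matrix.star_apply, RCLike.star_def, Matrix.one_apply, Prod.mk.injEq] at h1
    rw [h1]
    by_cases h : s = s' <;> simp [h]
  have key : ∑ x : ι × Fin dE,
      (starRingEnd ℂ) (∑ s, U x (a, s) * e s) * (∑ s, U x (a, s) * e s) = 1 := by
    calc ∑ x : ι × Fin dE, (starRingEnd ℂ) (∑ s, U x (a, s) * e s) * (∑ s, U x (a, s) * e s)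
        = ∑ x : ι × Fin dE, ∑ s, ∑ s',
            ((starRingEnd ℂ) (U x (a, s)) * (starRingEnd ℂ) (e s)) * (U x (a, s') * e s') := by
          refine Finset.sum_congr rfl fun x _ => ?_
          rw [map_sum, Finset.sum_mul_sum]
          exact Finset.sum_congr rfl fun s _ => Finset.sum_congr rfl fun s' _ => by
            rw [_root_.map_mul]
      _ = ∑ s, ∑ s', ((starRingEnd ℂ) (e s) * e s') *
            ∑ x : ι × Fin dE, (starRingEnd ℂ) (U x (a, s)) * U x (a, s') := by
          rw [Finset.sum_comm]
          refine Finset.sum_congr rfl fun s _ => ?_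
          rw [Finset.sum_comm]
          refine Finset.sum_congr rfl fun s' _ => ?_
          rw [Finset.mul_sum]
          exact Finset.sum_congr rfl fun x _ => by ring
      _ = ∑ s, (starRingEnd ℂ) (e s) * e s := by
          refine Finset.sum_congr rfl fun s _ => ?_
          calc ∑ s', ((starRingEnd ℂ) (e s) * e s') *
                ∑ x : ι × Fin dE, (starRingEnd ℂ) (U x (a, s)) * U x (a, s')
              = ∑ s', ((starRingEnd ℂ) (e s) * e s') * (if s = s' then 1 else 0) := by
                exact Finset.sum_congr rfl fun s' _ => by rw [horth]
            _ = (starRingEnd ℂ) (e s) * e s := by simp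
      _ = 1 := he
  have key2 : ((∑ x : ι × Fin dE, Complex.normSq (∑ s, U x (a, s) * e s) : ℝ) : ℂ) = 1 := by
    rw [Complex.ofReal_sum]
    rw [← key]
    refine Finset.sum_congr rfl fun x _ => ?_
    rw [← Complex.normSq_eq_conj_mul_self]
  exact_mod_cast key2

lemma gqo_sum_normSq {ι : Type*} [Fintype ι] [DecidableEq ι] [Nonempty ι]
    {Φ : Matrix ι ι ℂ → Matrix ι ι ℂ} (h : IsGQO Φ) :
    ∑ p : ι × ι, ∑ q : ι × ι, Complex.normSq (choiHalf Φ p q) ≤ 1 := by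
  obtain ⟨dE, e, U, V, he, hU, hV, hrep⟩ := h
  have hcard : (0 : ℝ) < (Fintype.card ι : ℝ) := by
    exact_mod_cast Fintype.card_pos
  have hentry : ∀ p q : ι × ι, choiHalf Φ p q =
      ((Fintype.card ι : ℂ))⁻¹ * ∑ k : Fin dE,
        (∑ s, U (p.1, k) (p.2, s) * e s) * (starRingEnd ℂ) (∑ s, V (q.1, k) (q.2, s) * e s) := by
    intro p q
    show ((Fintype.card ι : ℂ))⁻¹ * Φ (Matrix.single p.2 q.2 1) p.1 q.1 = _
    rw [hrep, gqo_entry]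
  have hPsum : ∑ p : ι × ι, (∑ k : Fin dE, Complex.normSq (∑ s, U (p.1, k) (p.2, s) * e s))
      = (Fintype.card ι : ℝ) := by
    rw [Fintype.sum_prod_type_right]
    calc ∑ a : ι, ∑ i : ι, ∑ k : Fin dE, Complex.normSq (∑ s, U (i, k) (a, s) * e s)
        = ∑ a : ι, ∑ x : ι × Fin dE, Complex.normSq (∑ s, U x (a, s) * e s) := by
          exact Finset.sum_congr rfl fun a _ =>
            (Fintype.sum_prod_type (fun x : ι × Fin dE => Complex.normSq (∑ s, U x (a, s) * e s))).symm
      _ = ∑ a : ι, (1 : ℝ) := Finset.sum_congr rfl fun a _ => unit_cols e he hU a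
      _ = (Fintype.card ι : ℝ) := by simp
  have hQsum : ∑ q : ι × ι, (∑ k : Fin dE, Complex.normSq (∑ s, V (q.1, k) (q.2, s) * e s))
      = (Fintype.card ι : ℝ) := by
    rw [Fintype.sum_prod_type_right]
    calc ∑ b : ι, ∑ j : ι, ∑ k : Fin dE, Complex.normSq (∑ s, V (j, k) (b, s) * e s)
        = ∑ b : ι, ∑ x : ι × Fin dE, Complex.normSq (∑ s, V x (b, s) * e s) := by
          exact Finset.sum_congr rfl fun b _ =>
            (Fintype.sum_prod_type (fun x : ι × Fin dE => Complex.normSq (∑ s, V x (b, s) * e s))).symm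
      _ = ∑ b : ι, (1 : ℝ) := Finset.sum_congr rfl fun b _ => unit_cols e he hV b
      _ = (Fintype.card ι : ℝ) := by simp
  set P : ι × ι → ℝ := fun p => ∑ k : Fin dE, Complex.normSq (∑ s, U (p.1, k) (p.2, s) * e s) with hP
  set Q : ι × ι → ℝ := fun q => ∑ k : Fin dE, Complex.normSq (∑ s, V (q.1, k) (q.2, s) * e s) with hQ
  have hterm : ∀ p q : ι × ι, Complex.normSq (choiHalf Φ p q) ≤
      ((Fintype.card ι : ℝ))⁻¹ * ((Fintype.card ι : ℝ))⁻¹ * (P p * Q q) := by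
    intro p q
    rw [hentry p q, _root_.map_mul]
    have h1 : Complex.normSq (((Fintype.card ι : ℂ))⁻¹)
        = ((Fintype.card ι : ℝ))⁻¹ * ((Fintype.card ι : ℝ))⁻¹ := by
      rw [show ((Fintype.card ι : ℂ))⁻¹ = (((((Fintype.card ι : ℝ)))⁻¹ : ℝ) : ℂ) by push_cast; ring]
      rw [Complex.normSq_ofReal]
    rw [h1]
    have h2 : Complex.normSq (∑ k : Fin dE,
        (∑ s, U (p.1, k) (p.2, s) * e s) * (starRingEnd ℂ) (∑ s, V (q.1, k) (q.2, s) * e s))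
        ≤ P p * Q q := by
      refine le_trans (nsq_sum_le _ _) ?_
      rw [hP, hQ]
      have h3 : ∀ k : Fin dE, Complex.normSq ((starRingEnd ℂ) (∑ s, V (q.1, k) (q.2, s) * e s))
          = Complex.normSq (∑ s, V (q.1, k) (q.2, s) * e s) := fun k => Complex.normSq_conj _
      exact le_of_eq (by rw [Finset.sum_congr rfl fun k _ => h3 k])
    have hnn : (0:ℝ) ≤ ((Fintype.card ι : ℝ))⁻¹ * ((Fintype.card ι : ℝ))⁻¹ := by positivity
    exact mul_le_mul_of_nonneg_left h2 hnn
  calc ∑ p : ι × ι, ∑ q : ι × ι, Complex.normSq (choiHalf Φ p q)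
      ≤ ∑ p : ι × ι, ∑ q : ι × ι,
          ((Fintype.card ι : ℝ))⁻¹ * ((Fintype.card ι : ℝ))⁻¹ * (P p * Q q) :=
        Finset.sum_le_sum fun p _ => Finset.sum_le_sum fun q _ => hterm p q
    _ = ((Fintype.card ι : ℝ))⁻¹ * ((Fintype.card ι : ℝ))⁻¹ *
          ((∑ p : ι × ι, P p) * (∑ q : ι × ι, Q q)) := by
        calc ∑ p : ι × ι, ∑ q : ι × ι,
              ((Fintype.card ι : ℝ))⁻¹ * ((Fintype.card ι : ℝ))⁻¹ * (P p * Q q)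
            = ∑ p : ι × ι, ((Fintype.card ι : ℝ))⁻¹ * ((Fintype.card ι : ℝ))⁻¹ * P p *
                (∑ q : ι × ι, Q q) := by
              refine Finset.sum_congr rfl fun p _ => ?_
              rw [Finset.mul_sum]
              exact Finset.sum_congr rfl fun q _ => by ring
          _ = _ := by rw [← Finset.sum_mul, ← Finset.mul_sum, mul_assoc]
    _ = 1 := by
        rw [hPsum, hQsum]
        field_simp

lemma traceNorm_eq_sum_sqrt {m n : Type*} [Fintype m] [Fintype n] [DecidableEq m]
    (M : Matrix m n ℂ) :
    traceNorm M = ∑ i, Real.sqrt ((Matrix.posSemidef_self_mul_conjTranspose M).1.eigenvalues i) := by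
  have hH := Matrix.posSemidef_self_mul_conjTranspose M
  have h1 : hH.sqrt = (hH.1.eigenvectorUnitary : Matrix m m ℂ) *
      diagonal ((↑) ∘ Real.sqrt ∘ hH.1.eigenvalues) *
      (star (hH.1.eigenvectorUnitary : Matrix m m ℂ)) := rfl
  show (hH.sqrt.trace).re = _
  rw [h1, Matrix.trace_mul_cycle, Unitary.coe_star_mul_self, one_mul,
    Matrix.trace_diagonal]
  simp [Complex.ofReal_re]

lemma cs_abs {ι : Type*} [Fintype ι] (x y : ι → ℂ) :
    ‖∑ i, x i * y i‖ ≤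
      Real.sqrt (∑ i, Complex.normSq (x i)) * Real.sqrt (∑ i, Complex.normSq (y i)) := by
  calc ‖∑ i, x i * y i‖ ≤ ∑ i, ‖x i * y i‖ :=
        (norm_sum_le _ _)
    _ = ∑ i, ‖x i‖ * ‖y i‖ := by simp [norm_mul]
    _ ≤ _ := by
        have h := Real.sum_mul_le_sqrt_mul_sqrt Finset.univ
          (fun i => ‖x i‖) (fun i => ‖y i‖)
        simpa [Complex.sq_norm] using h

lemma traceNorm_sum_rank_one {m n K : Type*} [Fintype m] [Fintype n] [Fintype K]
    [DecidableEq m]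
    (α : K → ℂ) (a : K → m → ℂ) (b : K → n → ℂ)
    (ha : ∀ k, ∑ i, Complex.normSq (a k i) ≤ 1) (hb : ∀ k, ∑ j, Complex.normSq (b k j) ≤ 1)
    (M : Matrix m n ℂ) (hM : M = Matrix.of fun i j => ∑ k, α k * a k i * b k j) :
    traceNorm M ≤ ∑ k, ‖α k‖ := by
  classical
  set lam := (Matrix.posSemidef_self_mul_conjTranspose M).1.eigenvalues with hlamdef
  have hH := Matrix.posSemidef_self_mul_conjTranspose M
  have hlam0 : ∀ i, 0 ≤ lam i := hH.eigenvalues_nonneg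
  set u : m → m → ℂ := fun i => ((Matrix.posSemidef_self_mul_conjTranspose M).1.eigenvectorBasis i :
    EuclideanSpace ℂ m) with hu
  have hEig : ∀ i, (M * Mᴴ) *ᵥ u i = lam i • u i := fun i =>
    (Matrix.posSemidef_self_mul_conjTranspose M).1.mulVec_eigenvectorBasis i
  set c : m → ℝ := fun i => (Real.sqrt (lam i))⁻¹ with hc
  set v : m → n → ℂ := fun i => ((c i : ℂ) • (Mᴴ *ᵥ u i)) with hv
  have hinner : ∀ (x y : EuclideanSpace ℂ m), (inner ℂ x y : ℂ) = star (x : m → ℂ) ⬝ᵥ y :=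
    fun x y => by rw [EuclideanSpace.inner_eq_star_dotProduct, dotProduct_comm]
  have hinnern : ∀ (x y : EuclideanSpace ℂ n), (inner ℂ x y : ℂ) = star (x : n → ℂ) ⬝ᵥ y :=
    fun x y => by rw [EuclideanSpace.inner_eq_star_dotProduct, dotProduct_comm]
  have hu_on : ∀ i j, star (u i) ⬝ᵥ u j = if i = j then 1 else 0 := by
    intro i j
    rw [← hinner]
    exact (orthonormal_iff_ite (𝕜 := ℂ)).mp
      (Matrix.posSemidef_self_mul_conjTranspose M).1.eigenvectorBasis.orthonormal i j
  have key1 : ∀ x y : m → ℂ, star (Mᴴ *ᵥ x) ⬝ᵥ (Mᴴ *ᵥ y) = star x ⬝ᵥ ((M * Mᴴ) *ᵥ y) := by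
    intro x y
    rw [star_mulVec, conjTranspose_conjTranspose, ← dotProduct_mulVec, mulVec_mulVec]
  have key3 : ∀ i j, star (u i) ⬝ᵥ ((M * Mᴴ) *ᵥ u j) = if i = j then ((lam j : ℝ) : ℂ) else 0 := by
    intro i j
    rw [hEig j, dotProduct_smul, hu_on i j]
    by_cases h : i = j <;> simp [h, Complex.real_smul]
  have hvv : ∀ i j, star (v i) ⬝ᵥ v j =
      if i = j then (((c j)^2 * lam j : ℝ) : ℂ) else 0 := by
    intro i j
    rw [hv]
    simp only [star_smul, smul_dotProduct, dotProduct_smul]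
    rw [key1, key3 i j]
    by_cases h : i = j
    · subst h
      simp [smul_eq_mul, ← Complex.ofReal_mul]
      ring_nf
    · simp [h]
  have hc2 : ∀ i, lam i ≠ 0 → (c i)^2 * lam i = 1 := by
    intro i hi
    rw [hc]
    simp only [inv_pow, Real.sq_sqrt (hlam0 i)]
    exact inv_mul_cancel₀ hi
  have hv0 : ∀ i, lam i = 0 → v i = 0 := by
    intro i hi
    rw [hv]
    simp [hc, hi]
  have vfull : True := trivial
  have ht : ∀ i, star (u i) ⬝ᵥ (M *ᵥ v i) = ((Real.sqrt (lam i) : ℝ) : ℂ) := by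
    intro i
    rw [hv, mulVec_smul, mulVec_mulVec, dotProduct_smul, key3 i i, if_pos rfl]
    rw [smul_eq_mul, ← Complex.ofReal_mul]
    norm_cast
    by_cases hi : lam i = 0
    · simp [hc, hi]
    · have hs : Real.sqrt (lam i) * Real.sqrt (lam i) = lam i := Real.mul_self_sqrt (hlam0 i)
      have hsne : Real.sqrt (lam i) ≠ 0 := by
        rw [Real.sqrt_ne_zero' ]
        exact lt_of_le_of_ne (hlam0 i) (Ne.symm hi)
      rw [hc]
      calc (Real.sqrt (lam i))⁻¹ * lam i
          = (Real.sqrt (lam i))⁻¹ * (Real.sqrt (lam i) * Real.sqrt (lam i)) := by rw [hs]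
        _ = Real.sqrt (lam i) := by rw [← mul_assoc, inv_mul_cancel₀ hsne, one_mul]
  have dot_sum : ∀ {P : Type} [Fintype P] (x : P → ℂ) (f : K → P → ℂ) (β : K → ℂ),
      (x ⬝ᵥ fun i => ∑ k, β k * f k i) = ∑ k, β k * (x ⬝ᵥ f k) := by
    intro P _ x f β
    simp only [dotProduct, Finset.mul_sum]
    rw [Finset.sum_comm]
    refine Finset.sum_congr rfl fun k _ => Finset.sum_congr rfl fun i _ => by ring
  have expand : ∀ (y : n → ℂ) (x : m → ℂ),
      star x ⬝ᵥ (M *ᵥ y) = ∑ k, α k * (star x ⬝ᵥ a k) * (b k ⬝ᵥ y) := by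
    intro y x
    have h1 : ∀ i, (M *ᵥ y) i = ∑ k, (α k * (b k ⬝ᵥ y)) * a k i := by
      intro i
      show (fun j => M i j) ⬝ᵥ y = _
      simp only [hM, dotProduct, of_apply, Finset.sum_mul]
      rw [Finset.sum_comm]
      refine Finset.sum_congr rfl fun k _ => ?_
      show _ = α k * (∑ j, b k j * y j) * a k i
      rw [Finset.mul_sum, Finset.sum_mul]
      exact Finset.sum_congr rfl fun j _ => by ring
    show ∑ i, star x i * (M *ᵥ y) i = _
    calc ∑ i, star x i * (M *ᵥ y) i
        = ∑ i, ∑ k, star x i * ((α k * (b k ⬝ᵥ y)) * a k i) := by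
          refine Finset.sum_congr rfl fun i _ => ?_
          rw [h1 i, Finset.mul_sum]
      _ = ∑ k, ∑ i, star x i * ((α k * (b k ⬝ᵥ y)) * a k i) := Finset.sum_comm
      _ = ∑ k, α k * (star x ⬝ᵥ a k) * (b k ⬝ᵥ y) := by
          refine Finset.sum_congr rfl fun k _ => ?_
          generalize (b k ⬝ᵥ y : ℂ) = B
          show _ = α k * (∑ i, star x i * a k i) * B
          rw [Finset.mul_sum, Finset.sum_mul]
          exact Finset.sum_congr rfl fun i _ => by ring
  have besselA : ∀ k, ∑ i, Complex.normSq (star (u i) ⬝ᵥ a k) ≤ 1 := by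
    intro k
    have hON := (Matrix.posSemidef_self_mul_conjTranspose M).1.eigenvectorBasis.orthonormal
    set aE : EuclideanSpace ℂ m := WithLp.toLp 2 (a k) with haE
    have h := hON.sum_inner_products_le (s := Finset.univ) aE
    have hnorm : ‖aE‖^2 = ∑ i, Complex.normSq (a k i) := by
      rw [EuclideanSpace.norm_eq, Real.sq_sqrt (by positivity)]
      exact Finset.sum_congr rfl fun i _ => by
        rw [haE]
        show ‖a k i‖^2 = _
        rw [Complex.sq_norm]
    calc ∑ i, Complex.normSq (star (u i) ⬝ᵥ a k)
        = ∑ i, ‖(inner ℂ ((Matrix.posSemidef_self_mul_conjTranspose M).1.eigenvectorBasis i)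
            aE : ℂ)‖^2 := by
          refine Finset.sum_congr rfl fun i _ => ?_
          have h0 : (inner ℂ ((Matrix.posSemidef_self_mul_conjTranspose M).1.eigenvectorBasis i)
              aE : ℂ) = star (u i) ⬝ᵥ a k := by rw [hinner]
          rw [h0, Complex.sq_norm]
      _ ≤ ‖aE‖^2 := h
      _ = ∑ i, Complex.normSq (a k i) := hnorm
      _ ≤ 1 := ha k
  have besselB : ∀ k, ∑ i, Complex.normSq (b k ⬝ᵥ v i) ≤ 1 := by
    intro k
    set vF : m → EuclideanSpace ℂ n := fun i => WithLp.toLp 2 (v i) with hvF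
    have hvon : Orthonormal ℂ (fun i : {i : m // lam i ≠ 0} => vF i.1) := by
      rw [orthonormal_iff_ite]
      intro i j
      rw [hinnern]
      show star (v i.1) ⬝ᵥ v j.1 = _
      rw [hvv]
      by_cases h : i = j
      · subst h
        simp [hc2 i.1 i.2]
      · have h' : i.1 ≠ j.1 := fun hh => h (Subtype.ext hh)
        simp [h', h]
    set w : EuclideanSpace ℂ n := WithLp.toLp 2 (star (b k) : n → ℂ) with hw
    have h := hvon.sum_inner_products_le (s := Finset.univ) w
    have hnormw : ‖w‖^2 = ∑ j, Complex.normSq (b k j) := by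
      rw [EuclideanSpace.norm_eq, Real.sq_sqrt (by positivity)]
      refine Finset.sum_congr rfl fun j _ => ?_
      have h0 : w j = star (b k j) := by rw [hw]; rfl
      rw [h0, Complex.sq_norm, RCLike.star_def, Complex.normSq_conj]
    have hterm : ∀ i : m, Complex.normSq (b k ⬝ᵥ v i) = ‖(inner ℂ (vF i) w : ℂ)‖^2 := by
      intro i
      have h0 : (inner ℂ w (vF i) : ℂ) = b k ⬝ᵥ v i := by
        rw [hinnern, hw, hvF, WithLp.ofLp_toLp, WithLp.ofLp_toLp, star_star]
      rw [norm_inner_symm, h0, Complex.sq_norm]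
    have hsplit : ∑ i : m, ‖(inner ℂ (vF i) w : ℂ)‖^2
        = ∑ i : {i : m // lam i ≠ 0}, ‖(inner ℂ (vF i.1) w : ℂ)‖^2 := by
      have e1 : ∑ i ∈ Finset.univ.filter (fun i => lam i ≠ 0), ‖(inner ℂ (vF i) w : ℂ)‖^2
          = ∑ i : {i : m // lam i ≠ 0}, ‖(inner ℂ (vF i.1) w : ℂ)‖^2 :=
        Finset.sum_subtype _ (fun x => by simp) _
      have e2 : ∑ i ∈ Finset.univ.filter (fun i => lam i ≠ 0), ‖(inner ℂ (vF i) w : ℂ)‖^2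
          = ∑ i : m, ‖(inner ℂ (vF i) w : ℂ)‖^2 := by
        apply Finset.sum_filter_of_ne
        intro i _ hne
        intro hzero
        apply hne
        have h0 : vF i = 0 := by simp [hvF, hv0 i hzero]
        have h1 : (inner ℂ (vF i) w : ℂ) = star (vF i).ofLp ⬝ᵥ w.ofLp := hinnern _ _
        rw [h1, h0]
        simp
      exact e2.symm.trans e1
    calc ∑ i : m, Complex.normSq (b k ⬝ᵥ v i)
        = ∑ i : m, ‖(inner ℂ (vF i) w : ℂ)‖^2 := Finset.sum_congr rfl fun i _ => hterm i
      _ = ∑ i : {i : m // lam i ≠ 0}, ‖(inner ℂ (vF i.1) w : ℂ)‖^2 := hsplit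
      _ ≤ ‖w‖^2 := h
      _ = ∑ j, Complex.normSq (b k j) := hnormw
      _ ≤ 1 := hb k
  calc traceNorm M = ∑ i, Real.sqrt (lam i) := traceNorm_eq_sum_sqrt M
    _ = (∑ i, star (u i) ⬝ᵥ (M *ᵥ v i)).re := by
        rw [Complex.re_sum]
        exact Finset.sum_congr rfl fun i _ => by rw [ht i, Complex.ofReal_re]
    _ = (∑ k, α k * ∑ i, (star (u i) ⬝ᵥ a k) * (b k ⬝ᵥ v i)).re := by
        congr 1
        calc ∑ i, star (u i) ⬝ᵥ (M *ᵥ v i)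
            = ∑ i, ∑ k, α k * (star (u i) ⬝ᵥ a k) * (b k ⬝ᵥ v i) :=
              Finset.sum_congr rfl fun i _ => expand (v i) (u i)
          _ = ∑ k, ∑ i, α k * (star (u i) ⬝ᵥ a k) * (b k ⬝ᵥ v i) := Finset.sum_comm
          _ = ∑ k, α k * ∑ i, (star (u i) ⬝ᵥ a k) * (b k ⬝ᵥ v i) := by
              refine Finset.sum_congr rfl fun k _ => ?_
              rw [Finset.mul_sum]
              exact Finset.sum_congr rfl fun i _ => by ring
    _ ≤ ∑ k, ‖α k * ∑ i, (star (u i) ⬝ᵥ a k) * (b k ⬝ᵥ v i)‖ := by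
        rw [Complex.re_sum]
        exact Finset.sum_le_sum fun k _ => Complex.re_le_norm _
    _ ≤ ∑ k, ‖α k‖ := by
        refine Finset.sum_le_sum fun k _ => ?_
        rw [norm_mul]
        have hS : ‖(∑ i, (star (u i) ⬝ᵥ a k) * (b k ⬝ᵥ v i))‖ ≤ 1 := by
          refine le_trans (cs_abs _ _) ?_
          have h1 : Real.sqrt (∑ i, Complex.normSq (star (u i) ⬝ᵥ a k)) ≤ 1 :=
            Real.sqrt_le_one.mpr (besselA k)
          have h2 : Real.sqrt (∑ i, Complex.normSq (b k ⬝ᵥ v i)) ≤ 1 :=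
            Real.sqrt_le_one.mpr (besselB k)
          exact mul_le_one₀ h1 (Real.sqrt_nonneg _) h2
        calc ‖α k‖ * ‖(∑ i, (star (u i) ⬝ᵥ a k) * (b k ⬝ᵥ v i))‖
            ≤ ‖α k‖ * 1 :=
              mul_le_mul_of_nonneg_left hS (norm_nonneg _)
          _ = ‖α k‖ := mul_one _

theorem stmt0 (d L K : ℕ) (hd : 0 < d) (hL : 0 < L) (hK : 0 < K)
    (Φ : Fin L → Fin K → (Matrix (Fin d) (Fin d) ℂ → Matrix (Fin d) (Fin d) ℂ))
    (hΦ : ∀ l k, IsGQO (Φ l k)) (α : Fin K → ℂ)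
    (X : Matrix (Fin L → Fin d × Fin d) (Fin L → Fin d × Fin d) ℂ)
    (hX : X = Matrix.of fun p q => ∑ k, α k * ∏ l, choiHalf (Φ l k) (p l) (q l)) :
    ∀ l : Fin L, traceNorm (realign X l) ≤ ∑ k, ‖α k‖ := by
  intro l
  haveI : Nonempty (Fin d) := ⟨⟨0, hd⟩⟩
  set a : Fin K → ((Fin d × Fin d) × (Fin d × Fin d)) → ℂ :=
    fun k r => choiHalf (Φ l k) r.1 r.2 with haa
  set b : Fin K → ({ m : Fin L // m ≠ l } → (Fin d × Fin d) × (Fin d × Fin d)) → ℂ :=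
    fun k g => ∏ m : { m : Fin L // m ≠ l }, choiHalf (Φ m.1 k) (g m).1 (g m).2 with hbb
  have hM : realign X l = Matrix.of fun r g => ∑ k, α k * a k r * b k g := by
    funext r g
    show X _ _ = _
    rw [hX]
    show ∑ k, α k * ∏ m, choiHalf (Φ m k)
        ((fun m => if h : m = l then r.1 else (g ⟨m, h⟩).1) m)
        ((fun m => if h : m = l then r.2 else (g ⟨m, h⟩).2) m) = _
    refine Finset.sum_congr rfl fun k _ => ?_
    have hprod : ∏ m, choiHalf (Φ m k)
        ((fun m => if h : m = l then r.1 else (g ⟨m, h⟩).1) m)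
        ((fun m => if h : m = l then r.2 else (g ⟨m, h⟩).2) m) = a k r * b k g := by
      rw [← Finset.mul_prod_erase Finset.univ _ (Finset.mem_univ l)]
      congr 1
      · simp only [dif_pos rfl]
        rfl
      · rw [Finset.prod_subtype (p := fun m => m ≠ l) (Finset.univ.erase l)
          (fun x => by simp [Finset.mem_erase]) (fun m => choiHalf (Φ m k)
            ((fun m => if h : m = l then r.1 else (g ⟨m, h⟩).1) m)
            ((fun m => if h : m = l then r.2 else (g ⟨m, h⟩).2) m))]
        refine Finset.prod_congr rfl fun m _ => ?_
        simp only [dif_neg m.2]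
    rw [hprod]
    ring
  have ha : ∀ k, ∑ r : (Fin d × Fin d) × (Fin d × Fin d), Complex.normSq (a k r) ≤ 1 := by
    intro k
    have h := gqo_sum_normSq (hΦ l k)
    calc ∑ r : (Fin d × Fin d) × (Fin d × Fin d), Complex.normSq (a k r)
        = ∑ p : Fin d × Fin d, ∑ q : Fin d × Fin d, Complex.normSq (choiHalf (Φ l k) p q) :=
          Fintype.sum_prod_type _
      _ ≤ 1 := h
  have hb : ∀ k, ∑ g : { m : Fin L // m ≠ l } → (Fin d × Fin d) × (Fin d × Fin d),
      Complex.normSq (b k g) ≤ 1 := by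
    intro k
    have h1 : ∀ g, Complex.normSq (b k g)
        = ∏ m : { m : Fin L // m ≠ l }, Complex.normSq (choiHalf (Φ m.1 k) (g m).1 (g m).2) := by
      intro g
      rw [hbb]
      exact map_prod Complex.normSq _ _
    calc ∑ g : { m : Fin L // m ≠ l } → (Fin d × Fin d) × (Fin d × Fin d),
          Complex.normSq (b k g)
        = ∑ g : { m : Fin L // m ≠ l } → (Fin d × Fin d) × (Fin d × Fin d),
          ∏ m : { m : Fin L // m ≠ l }, Complex.normSq (choiHalf (Φ m.1 k) (g m).1 (g m).2) :=
          Finset.sum_congr rfl fun g _ => h1 g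
      _ = ∏ m : { m : Fin L // m ≠ l }, ∑ x : (Fin d × Fin d) × (Fin d × Fin d),
          Complex.normSq (choiHalf (Φ m.1 k) x.1 x.2) := by
          rw [Finset.prod_univ_sum]
          rw [Fintype.piFinset_univ]
      _ ≤ 1 := by
          refine Finset.prod_le_one (fun m _ => ?_) (fun m _ => ?_)
          · exact Finset.sum_nonneg fun x _ => Complex.normSq_nonneg _
          · calc ∑ x : (Fin d × Fin d) × (Fin d × Fin d),
                Complex.normSq (choiHalf (Φ m.1 k) x.1 x.2)
                = ∑ p : Fin d × Fin d, ∑ q : Fin d × Fin d,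
                    Complex.normSq (choiHalf (Φ m.1 k) p q) := Fintype.sum_prod_type _
              _ ≤ 1 := gqo_sum_normSq (hΦ m.1 k)
  exact traceNorm_sum_rank_one α a b ha hb (realign X l) hM
end

section
/- Let A and B be Hermitian n×n complex matrices and T ≥ 0. With B_I(t) = e^{iAt} B e^{−iAt}, D_0 = I, and D_m = ∫_{0 ≤ t_m ≤ ⋯ ≤ t_1 ≤ T} B_I(t_1) B_I(t_2) ⋯ B_I(t_m) dt_1 ⋯ dt_m for m ≥ 1, one has ‖D_m‖ ≤ (‖B‖T)^m / m! for all m ≥ 0, the series Σ_{m=0}^{∞} (−i)^m D_m converges absolutely in operator norm, and the Dyson series identity holds: e^{iAT} e^{−i(A+B)T} = Σ_{m=0}^{∞} (−i)^m D_m. -/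
open Matrix MeasureTheory
open scoped Matrix.Norms.L2Operator

/-- The interaction-picture operator `B_I(t) = e^{iAt} B e^{−iAt}`. -/
noncomputable def interactionPicture {n : ℕ} (A B : Matrix (Fin n) (Fin n) ℂ) (t : ℝ) :
    Matrix (Fin n) (Fin n) ℂ :=
  NormedSpace.exp ((Complex.I * (t : ℂ)) • A) * B *
    NormedSpace.exp ((-(Complex.I * (t : ℂ))) • A)

/-- The ordered simplex `{(t_1, …, t_m) : 0 ≤ t_m ≤ ⋯ ≤ t_1 ≤ T}`. -/
def orderedSimplex (m : ℕ) (T : ℝ) : Set (Fin m → ℝ) :=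
  {t | (∀ i, t i ∈ Set.Icc 0 T) ∧ ∀ i j : Fin m, i ≤ j → t j ≤ t i}

/-- The `m`-th Dyson term
`D_m = ∫_{0 ≤ t_m ≤ ⋯ ≤ t_1 ≤ T} B_I(t_1) ⋯ B_I(t_m) dt_1 ⋯ dt_m` (with `D_0 = I`). -/
noncomputable def dysonTerm {n : ℕ} (A B : Matrix (Fin n) (Fin n) ℂ) (T : ℝ) (m : ℕ) :
    Matrix (Fin n) (Fin n) ℂ :=
  ∫ t in orderedSimplex m T,
    (List.ofFn fun i : Fin m => interactionPicture A B (t i)).prod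

section DysonAux

variable {n : ℕ} (A B : Matrix (Fin n) (Fin n) ℂ)

noncomputable instance instNormedAlgebraRatMatrixDyson {n : ℕ} :
    NormedAlgebra ℚ (Matrix (Fin n) (Fin n) ℂ) :=
  NormedAlgebra.restrictScalars ℚ ℂ _

lemma continuous_ip : Continuous (interactionPicture A B) := by
  have h1 : Continuous fun t : ℝ => (Complex.I * (t : ℂ)) • A :=
    (continuous_const.mul Complex.continuous_ofReal).smul continuous_const
  have h2 : Continuous fun t : ℝ => (-(Complex.I * (t : ℂ))) • A :=
    (continuous_const.mul Complex.continuous_ofReal).neg.smul continuous_const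
  exact ((NormedSpace.exp_continuous.comp h1).mul continuous_const).mul
    (NormedSpace.exp_continuous.comp h2)

lemma matrix_norm_one_le : ‖(1 : Matrix (Fin n) (Fin n) ℂ)‖ ≤ 1 := by
  have h := CStarRing.norm_star_mul_self (x := (1 : Matrix (Fin n) (Fin n) ℂ))
  rw [star_one, one_mul] at h
  nlinarith [norm_nonneg (1 : Matrix (Fin n) (Fin n) ℂ)]

lemma norm_exp_skew_le_one (X : Matrix (Fin n) (Fin n) ℂ) (hX : star X = -X) :
    ‖NormedSpace.exp X‖ ≤ 1 := by
  have hmul : star (NormedSpace.exp X) * NormedSpace.exp X = 1 := by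
    rw [NormedSpace.star_exp, hX, ← NormedSpace.exp_add_of_commute (Commute.neg_left (Commute.refl X)),
      neg_add_cancel, NormedSpace.exp_zero]
  have h := CStarRing.norm_star_mul_self (x := NormedSpace.exp X)
  rw [hmul] at h
  nlinarith [norm_nonneg (NormedSpace.exp X), matrix_norm_one_le (n := n)]

lemma star_smul_hermitian {H : Matrix (Fin n) (Fin n) ℂ} (hH : H.IsHermitian) (c : ℂ) :
    star (c • H) = (starRingEnd ℂ c) • H := by
  rw [star_smul, Complex.star_def]
  congr 1

lemma norm_exp_I_smul_le_one {H : Matrix (Fin n) (Fin n) ℂ} (hH : H.IsHermitian) (t : ℝ) :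
    ‖NormedSpace.exp ((Complex.I * (t : ℂ)) • H)‖ ≤ 1 := by
  apply norm_exp_skew_le_one
  rw [star_smul_hermitian hH, ← neg_smul]
  congr 1
  simp [Complex.conj_ofReal]

lemma norm_exp_neg_I_smul_le_one {H : Matrix (Fin n) (Fin n) ℂ} (hH : H.IsHermitian) (t : ℝ) :
    ‖NormedSpace.exp ((-(Complex.I * (t : ℂ))) • H)‖ ≤ 1 := by
  apply norm_exp_skew_le_one
  rw [star_smul_hermitian hH, ← neg_smul]
  congr 1
  simp [Complex.conj_ofReal]

lemma norm_ip_le (hA : A.IsHermitian) (t : ℝ) : ‖interactionPicture A B t‖ ≤ ‖B‖ := by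
  have e1 := norm_exp_I_smul_le_one hA t
  have e2 := norm_exp_neg_I_smul_le_one hA t
  have h3 : ‖interactionPicture A B t‖
      ≤ ‖NormedSpace.exp ((Complex.I * (t : ℂ)) • A) * B‖ *
          ‖NormedSpace.exp ((-(Complex.I * (t : ℂ))) • A)‖ := norm_mul_le _ _
  have h4 : ‖NormedSpace.exp ((Complex.I * (t : ℂ)) • A) * B‖
      ≤ ‖NormedSpace.exp ((Complex.I * (t : ℂ)) • A)‖ * ‖B‖ := norm_mul_le _ _
  nlinarith [norm_nonneg (NormedSpace.exp ((Complex.I * (t : ℂ)) • A) * B),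
    norm_nonneg (NormedSpace.exp ((Complex.I * (t : ℂ)) • A)),
    norm_nonneg (NormedSpace.exp ((-(Complex.I * (t : ℂ))) • A)), norm_nonneg B]

lemma isClosed_orderedSimplex (m : ℕ) (T : ℝ) : IsClosed (orderedSimplex m T) := by
  have : orderedSimplex m T =
      (⋂ i, ({t : Fin m → ℝ | 0 ≤ t i} ∩ {t | t i ≤ T})) ∩
        ⋂ (i : Fin m) (j : Fin m) (_ : i ≤ j), {t : Fin m → ℝ | t j ≤ t i} := by
    ext t
    simp only [orderedSimplex, Set.mem_setOf_eq, Set.mem_Icc, Set.mem_inter_iff,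
      Set.mem_iInter, forall_and]
    try tauto
  rw [this]
  refine IsClosed.inter (isClosed_iInter fun i => IsClosed.inter ?_ ?_)
    (isClosed_iInter fun i => isClosed_iInter fun j => isClosed_iInter fun _ => ?_)
  · exact isClosed_le continuous_const (continuous_apply i)
  · exact isClosed_le (continuous_apply i) continuous_const
  · exact isClosed_le (continuous_apply j) (continuous_apply i)

lemma isCompact_orderedSimplex (m : ℕ) (T : ℝ) : IsCompact (orderedSimplex m T) := by
  refine IsCompact.of_isClosed_subset (isCompact_univ_pi fun i => isCompact_Icc (a := (0:ℝ)) (b := T))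
    (isClosed_orderedSimplex m T) ?_
  intro t ht i _
  exact ht.1 i

lemma continuous_prodIP (m : ℕ) :
    Continuous fun t : Fin m → ℝ =>
      (List.ofFn fun i => interactionPicture A B (t i)).prod := by
  have h : ∀ t : Fin m → ℝ, (List.ofFn fun i => interactionPicture A B (t i)).prod
      = ((List.finRange m).map fun i => interactionPicture A B (t i)).prod := by
    intro t; rw [List.ofFn_eq_map]
  simp_rw [h]
  exact continuous_list_prod _ fun i _ => (continuous_ip A B).comp (continuous_apply i)

lemma cons_mem_simplex {m : ℕ} {T s : ℝ} {u : Fin m → ℝ} :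
    Fin.cons s u ∈ orderedSimplex (m+1) T ↔ s ∈ Set.Icc 0 T ∧ u ∈ orderedSimplex m s := by
  constructor
  · rintro ⟨h1, h2⟩
    refine ⟨by simpa using h1 0, fun i => ⟨by simpa using (h1 i.succ).1, ?_⟩,
      fun i j hij => ?_⟩
    · simpa using h2 0 i.succ (Fin.zero_le _)
    · simpa using h2 i.succ j.succ (Fin.succ_le_succ_iff.mpr hij)
  · rintro ⟨hs, hu1, hu2⟩
    constructor
    · intro i
      induction i using Fin.cases with
      | zero => simpa using hs
      | succ j =>
        simp only [Fin.cons_succ, Set.mem_Icc]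
        exact ⟨(hu1 j).1, le_trans (hu1 j).2 hs.2⟩
    · intro i j hij
      induction j using Fin.cases with
      | zero =>
        have : i = 0 := le_antisymm hij (Fin.zero_le i)
        simp [this]
      | succ j =>
        induction i using Fin.cases with
        | zero =>
          simpa using (hu1 j).2
        | succ i =>
          simp only [Fin.cons_succ]
          exact hu2 i j (by rwa [Fin.succ_le_succ_iff] at hij)

lemma dysonTerm_zero (T : ℝ) : dysonTerm A B T 0 = 1 := by
  rw [dysonTerm]
  have h1 : orderedSimplex 0 T = Set.univ :=
    Set.eq_univ_of_forall (fun t => ⟨fun i => i.elim0, fun i => i.elim0⟩)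
  rw [h1, Measure.restrict_univ]
  simp only [List.ofFn_zero, List.prod_nil]
  rw [integral_const]
  have h2 : (volume : Measure (Fin 0 → ℝ)) Set.univ = 1 := by
    rw [volume_pi, Measure.pi_univ]
    simp
  rw [measureReal_def, h2]
  simp

set_option maxHeartbeats 1000000 in
lemma dysonTerm_succ_eq (m : ℕ) {T : ℝ} (hT : 0 ≤ T) :
    dysonTerm A B T (m+1)
      = ∫ s in (0:ℝ)..T, interactionPicture A B s * dysonTerm A B s m := by
  classical
  set ip := interactionPicture A B with hip
  set G : (Fin m → ℝ) → Matrix (Fin n) (Fin n) ℂ :=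
    fun u => (List.ofFn fun i => ip (u i)).prod with hG
  set F : (Fin (m+1) → ℝ) → Matrix (Fin n) (Fin n) ℂ :=
    fun t => (List.ofFn fun i => ip (t i)).prod with hF
  have hFc : Continuous F := continuous_prodIP A B (m+1)
  have hGc : Continuous G := continuous_prodIP A B m
  have hSm : MeasurableSet (orderedSimplex (m+1) T) :=
    (isClosed_orderedSimplex _ _).measurableSet
  have hFint : Integrable ((orderedSimplex (m+1) T).indicator F) := by
    rw [integrable_indicator_iff hSm]
    exact hFc.continuousOn.integrableOn_compact (isCompact_orderedSimplex _ _)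
  set e := MeasurableEquiv.piFinSuccAbove (fun _ : Fin (m+1) => ℝ) 0 with he
  have hmp : MeasurePreserving e := volume_preserving_piFinSuccAbove (fun _ : Fin (m+1) => ℝ) 0
  have hsymm : ∀ (s : ℝ) (u : Fin m → ℝ), e.symm (s, u) = Fin.cons s u := by
    intro s u
    show (Fin.insertNthEquiv (fun _ : Fin (m+1) => ℝ) 0) (s, u) = Fin.cons s u
    simp [Fin.insertNthEquiv, Fin.insertNth_zero']
  have key : dysonTerm A B T (m+1)
      = ∫ p : ℝ × (Fin m → ℝ), ((orderedSimplex (m+1) T).indicator F) (e.symm p) := by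
    rw [dysonTerm, ← integral_indicator hSm]
    rw [← hmp.integral_comp e.measurableEmbedding
      (fun p => ((orderedSimplex (m+1) T).indicator F) (e.symm p))]
    congr 1
    ext t
    rw [e.symm_apply_apply]
  have hintp : Integrable
      (fun p : ℝ × (Fin m → ℝ) => ((orderedSimplex (m+1) T).indicator F) (e.symm p)) := by
    exact ((MeasurePreserving.symm e hmp).integrable_comp_emb e.symm.measurableEmbedding).mpr hFint
  have inner_eq : ∀ s : ℝ,
      (∫ u : Fin m → ℝ, ((orderedSimplex (m+1) T).indicator F) (e.symm (s, u)))
        = (Set.Icc (0:ℝ) T).indicator (fun s => ip s * dysonTerm A B s m) s := by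
    intro s
    by_cases hs : s ∈ Set.Icc (0:ℝ) T
    · have hptwise : ∀ u, ((orderedSimplex (m+1) T).indicator F) (e.symm (s, u))
          = (orderedSimplex m s).indicator (fun u => ip s * G u) u := by
        intro u
        rw [hsymm]
        by_cases hu : u ∈ orderedSimplex m s
        · rw [Set.indicator_of_mem (cons_mem_simplex.mpr ⟨hs, hu⟩), Set.indicator_of_mem hu]
          simp only [hF, hG, List.ofFn_succ, Fin.cons_zero, Fin.cons_succ, List.prod_cons]
        · rw [Set.indicator_of_notMem (fun hc => hu (cons_mem_simplex.mp hc).2),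
            Set.indicator_of_notMem hu]
      simp_rw [hptwise]
      rw [Set.indicator_of_mem hs]
      rw [integral_indicator (isClosed_orderedSimplex _ _).measurableSet]
      have hGint : IntegrableOn G (orderedSimplex m s) :=
        hGc.continuousOn.integrableOn_compact (isCompact_orderedSimplex _ _)
      have hcomm := (ContinuousLinearMap.mul ℝ (Matrix (Fin n) (Fin n) ℂ) (ip s)).integral_comp_comm hGint
      simpa [ContinuousLinearMap.mul_apply', dysonTerm] using hcomm
    · have hptwise : ∀ u, ((orderedSimplex (m+1) T).indicator F) (e.symm (s, u)) = 0 := by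
        intro u
        rw [hsymm]
        exact Set.indicator_of_notMem (fun hc => hs (cons_mem_simplex.mp hc).1) _
      simp [hptwise, Set.indicator_of_notMem hs]
  rw [key]
  rw [Measure.volume_eq_prod]
  rw [integral_prod _ (by rw [← Measure.volume_eq_prod]; exact hintp)]
  rw [integral_congr_ae (Filter.Eventually.of_forall inner_eq)]
  rw [integral_indicator measurableSet_Icc]
  rw [intervalIntegral.integral_of_le hT, ← integral_Icc_eq_integral_Ioc]

/-- Recursive version of the Dyson terms. -/
noncomputable def Dr {n : ℕ} (A B : Matrix (Fin n) (Fin n) ℂ) :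
    ℕ → ℝ → Matrix (Fin n) (Fin n) ℂ
  | 0 => fun _ => 1
  | (k+1) => fun t => ∫ s in (0:ℝ)..t, interactionPicture A B s * Dr A B k s

lemma continuous_Dr (k : ℕ) : Continuous (Dr A B k) := by
  induction k with
  | zero => exact continuous_const
  | succ k ih =>
    have hc : Continuous fun s => interactionPicture A B s * Dr A B k s :=
      (continuous_ip A B).mul ih
    exact intervalIntegral.continuous_primitive (fun a b => hc.intervalIntegrable a b) 0

lemma dysonTerm_eq_Dr (m : ℕ) : ∀ {T : ℝ}, 0 ≤ T → dysonTerm A B T m = Dr A B m T := by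
  induction m with
  | zero => intro T hT; simpa [Dr] using dysonTerm_zero A B T
  | succ m ih =>
    intro T hT
    rw [dysonTerm_succ_eq A B m hT]
    show _ = ∫ s in (0:ℝ)..T, interactionPicture A B s * Dr A B m s
    apply intervalIntegral.integral_congr
    intro s hs
    rw [Set.uIcc_of_le hT] at hs
    simp only [ih hs.1]

lemma norm_Dr_le (hA : A.IsHermitian) (k : ℕ) :
    ∀ {t : ℝ}, 0 ≤ t → ‖Dr A B k t‖ ≤ (‖B‖ * t) ^ k / k.factorial := by
  induction k with
  | zero => intro t ht; simpa [Dr] using matrix_norm_one_le (n := n)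
  | succ k ih =>
    intro t ht
    have hcont : Continuous fun s => interactionPicture A B s * Dr A B k s :=
      (continuous_ip A B).mul (continuous_Dr A B k)
    calc ‖Dr A B (k+1) t‖
        = ‖∫ s in (0:ℝ)..t, interactionPicture A B s * Dr A B k s‖ := rfl
      _ ≤ ∫ s in (0:ℝ)..t, ‖interactionPicture A B s * Dr A B k s‖ :=
          intervalIntegral.norm_integral_le_integral_norm ht
      _ ≤ ∫ s in (0:ℝ)..t, ‖B‖ * ((‖B‖ * s) ^ k / k.factorial) := by
          apply intervalIntegral.integral_mono_on ht
            (hcont.norm.intervalIntegrable 0 t)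
            (((continuous_const.mul (((continuous_const.mul continuous_id).pow k).div_const _))).intervalIntegrable 0 t)
          intro s hs
          calc ‖interactionPicture A B s * Dr A B k s‖
              ≤ ‖interactionPicture A B s‖ * ‖Dr A B k s‖ := norm_mul_le _ _
            _ ≤ ‖B‖ * ((‖B‖ * s) ^ k / k.factorial) :=
                mul_le_mul (norm_ip_le A B hA s) (ih hs.1) (norm_nonneg _) (norm_nonneg _)
      _ = (‖B‖ * t) ^ (k+1) / (k+1).factorial := by
          have hrw : (fun s : ℝ => ‖B‖ * ((‖B‖ * s) ^ k / k.factorial))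
              = fun s : ℝ => (‖B‖ ^ (k+1) / k.factorial) * s ^ k := by
            funext s; rw [mul_pow]; ring
          rw [hrw, intervalIntegral.integral_const_mul, integral_pow]
          have hk : (k.factorial : ℝ) ≠ 0 := Nat.cast_ne_zero.mpr k.factorial_ne_zero
          have hk1 : ((k:ℝ) + 1) ≠ 0 := by positivity
          rw [Nat.factorial_succ, mul_pow]
          push_cast
          field_simp
          ring_nf
          try simp
          try exact Or.inl trivial

noncomputable def Usol {n : ℕ} (A B : Matrix (Fin n) (Fin n) ℂ) (t : ℝ) :
    Matrix (Fin n) (Fin n) ℂ :=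
  NormedSpace.exp ((Complex.I * (t : ℂ)) • A) *
    NormedSpace.exp ((-(Complex.I * (t : ℂ))) • (A + B))

lemma continuous_Usol : Continuous (Usol A B) := by
  have h1 : Continuous fun t : ℝ => (Complex.I * (t : ℂ)) • A :=
    (continuous_const.mul Complex.continuous_ofReal).smul continuous_const
  have h2 : Continuous fun t : ℝ => (-(Complex.I * (t : ℂ))) • (A + B) :=
    (continuous_const.mul Complex.continuous_ofReal).neg.smul continuous_const
  exact (NormedSpace.exp_continuous.comp h1).mul (NormedSpace.exp_continuous.comp h2)

lemma norm_Usol_le (hA : A.IsHermitian) (hB : B.IsHermitian) (t : ℝ) :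
    ‖Usol A B t‖ ≤ 1 := by
  have e1 := norm_exp_I_smul_le_one hA t
  have e2 := norm_exp_neg_I_smul_le_one (hA.add hB) t
  calc ‖Usol A B t‖ ≤ _ * _ := norm_mul_le _ _
    _ ≤ 1 * 1 := mul_le_mul e1 e2 (norm_nonneg _) zero_le_one
    _ = 1 := by ring

lemma real_smul_helper (t : ℝ) (z : ℂ) (X : Matrix (Fin n) (Fin n) ℂ) :
    (z * (t : ℂ)) • X = t • (z • X) := by
  rw [mul_comm, mul_smul]
  rw [show ((t : ℂ)) = algebraMap ℝ ℂ t from rfl, algebraMap_smul]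

lemma hasDerivAt_Usol (t : ℝ) :
    HasDerivAt (Usol A B)
      ((-Complex.I) • (interactionPicture A B t * Usol A B t)) t := by
  set M₁ : Matrix (Fin n) (Fin n) ℂ := Complex.I • A with hM₁
  set M₂ : Matrix (Fin n) (Fin n) ℂ := (-Complex.I) • (A + B) with hM₂
  have e1 : ∀ u : ℝ, (Complex.I * (u : ℂ)) • A = u • M₁ := fun u => real_smul_helper u _ _
  have e2 : ∀ u : ℝ, (-(Complex.I * (u : ℂ))) • (A + B) = u • M₂ := by
    intro u
    rw [neg_mul_eq_neg_mul, real_smul_helper u _ _]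
  have hexp : (NormedSpace.exp : Matrix (Fin n) (Fin n) ℂ → Matrix (Fin n) (Fin n) ℂ)
      = NormedSpace.exp := rfl
  have hU : Usol A B = fun u : ℝ =>
      NormedSpace.exp (u • M₁) * NormedSpace.exp (u • M₂) := by
    funext u
    rw [Usol, e1, e2, hexp]
  have h1 : HasDerivAt (fun u : ℝ => NormedSpace.exp (u • M₁))
      (NormedSpace.exp (t • M₁) * M₁) t := hasDerivAt_exp_smul_const M₁ t
  have h2 : HasDerivAt (fun u : ℝ => NormedSpace.exp (u • M₂))
      (M₂ * NormedSpace.exp (t • M₂)) t := hasDerivAt_exp_smul_const' M₂ t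
  have hprod := h1.mul h2
  have hinv : NormedSpace.exp ((-(Complex.I * (t : ℂ))) • A)
      * NormedSpace.exp ((Complex.I * (t : ℂ)) • A) = 1 := by
    rw [neg_smul, ← NormedSpace.exp_add_of_commute (Commute.neg_left (Commute.refl _)),
      neg_add_cancel, NormedSpace.exp_zero]
  have hip : interactionPicture A B t * Usol A B t
      = NormedSpace.exp (t • M₁) * B * NormedSpace.exp (t • M₂) := by
    rw [interactionPicture, Usol]
    rw [mul_assoc (NormedSpace.exp ((Complex.I * (t : ℂ)) • A) * B),
      ← mul_assoc (NormedSpace.exp ((-(Complex.I * (t : ℂ))) • A)), hinv, one_mul]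
    rw [e1, e2, hexp]
  have hM : M₁ + M₂ = (-Complex.I) • B := by
    rw [hM₁, hM₂, smul_add, ← add_assoc, ← add_smul]
    simp
  have hval : (-Complex.I) • (interactionPicture A B t * Usol A B t)
      = NormedSpace.exp (t • M₁) * M₁ * NormedSpace.exp (t • M₂)
        + NormedSpace.exp (t • M₁) * (M₂ * NormedSpace.exp (t • M₂)) := by
    rw [hip, ← smul_mul_assoc, ← mul_smul_comm, ← hM, mul_add, add_mul,
      mul_assoc (NormedSpace.exp (t • M₁)) M₂]
  rw [hval, hU]
  exact hprod

lemma Usol_volterra (t : ℝ) :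
    Usol A B t = 1 + (-Complex.I) •
      ∫ s in (0:ℝ)..t, interactionPicture A B s * Usol A B s := by
  have hcf : Continuous fun s =>
      (-Complex.I) • (interactionPicture A B s * Usol A B s) :=
    (((continuous_ip A B).mul (continuous_Usol A B))).const_smul (-Complex.I)
  have h := intervalIntegral.integral_eq_sub_of_hasDerivAt
    (f := Usol A B)
    (f' := fun s => (-Complex.I) • (interactionPicture A B s * Usol A B s))
    (fun s _ => hasDerivAt_Usol A B s) (hcf.intervalIntegrable 0 t)
  have h0 : Usol A B 0 = 1 := by
    simp [Usol]
  rw [h0, intervalIntegral.integral_smul] at h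
  rw [h]
  abel

noncomputable def Er {n : ℕ} (A B : Matrix (Fin n) (Fin n) ℂ) :
    ℕ → ℝ → Matrix (Fin n) (Fin n) ℂ
  | 0 => Usol A B
  | (k+1) => fun t => ∫ s in (0:ℝ)..t, interactionPicture A B s * Er A B k s

lemma continuous_Er (k : ℕ) : Continuous (Er A B k) := by
  induction k with
  | zero => exact continuous_Usol A B
  | succ k ih =>
    have hc : Continuous fun s => interactionPicture A B s * Er A B k s :=
      (continuous_ip A B).mul ih
    exact intervalIntegral.continuous_primitive (fun a b => hc.intervalIntegrable a b) 0

lemma Er_eq (k : ℕ) (t : ℝ) :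
    Er A B k t = Dr A B k t + (-Complex.I) • Er A B (k+1) t := by
  induction k generalizing t with
  | zero =>
    show Usol A B t = 1 + (-Complex.I) • ∫ s in (0:ℝ)..t, interactionPicture A B s * Usol A B s
    exact Usol_volterra A B t
  | succ k ih =>
    show (∫ s in (0:ℝ)..t, interactionPicture A B s * Er A B k s)
      = (∫ s in (0:ℝ)..t, interactionPicture A B s * Dr A B k s)
        + (-Complex.I) • ∫ s in (0:ℝ)..t, interactionPicture A B s * Er A B (k+1) s
    rw [← intervalIntegral.integral_smul, ← intervalIntegral.integral_add
      (f := fun s => interactionPicture A B s * Dr A B k s)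
      (g := fun s => (-Complex.I) • (interactionPicture A B s * Er A B (k+1) s))
      (((continuous_ip A B).mul (continuous_Dr A B k)).intervalIntegrable 0 t)
      ((((continuous_ip A B).mul (continuous_Er A B (k+1))).const_smul (-Complex.I)).intervalIntegrable 0 t)]
    apply intervalIntegral.integral_congr
    intro s _
    simp only [ih s, mul_add, mul_smul_comm]

lemma Usol_partial (k : ℕ) (T : ℝ) :
    Usol A B T = (∑ m ∈ Finset.range k, (-Complex.I) ^ m • Dr A B m T)
      + (-Complex.I) ^ k • Er A B k T := by
  induction k with
  | zero =>
    simp [Er]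
  | succ k ih =>
    rw [ih, Er_eq A B k T, smul_add, Finset.sum_range_succ, smul_smul, ← pow_succ]
    abel

lemma norm_Er_le (hA : A.IsHermitian) (hB : B.IsHermitian) (k : ℕ) :
    ∀ {t : ℝ}, 0 ≤ t → ‖Er A B k t‖ ≤ (‖B‖ * t) ^ k / k.factorial := by
  induction k with
  | zero =>
    intro t ht
    simpa [Er] using norm_Usol_le A B hA hB t
  | succ k ih =>
    intro t ht
    have hcont : Continuous fun s => interactionPicture A B s * Er A B k s :=
      (continuous_ip A B).mul (continuous_Er A B k)
    calc ‖Er A B (k+1) t‖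
        = ‖∫ s in (0:ℝ)..t, interactionPicture A B s * Er A B k s‖ := rfl
      _ ≤ ∫ s in (0:ℝ)..t, ‖interactionPicture A B s * Er A B k s‖ :=
          intervalIntegral.norm_integral_le_integral_norm ht
      _ ≤ ∫ s in (0:ℝ)..t, ‖B‖ * ((‖B‖ * s) ^ k / k.factorial) := by
          apply intervalIntegral.integral_mono_on ht
            (hcont.norm.intervalIntegrable 0 t)
            (((continuous_const.mul (((continuous_const.mul continuous_id).pow k).div_const _))).intervalIntegrable 0 t)
          intro s hs
          calc ‖interactionPicture A B s * Er A B k s‖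
              ≤ ‖interactionPicture A B s‖ * ‖Er A B k s‖ := norm_mul_le _ _
            _ ≤ ‖B‖ * ((‖B‖ * s) ^ k / k.factorial) :=
                mul_le_mul (norm_ip_le A B hA s) (ih hs.1) (norm_nonneg _) (norm_nonneg _)
      _ = (‖B‖ * t) ^ (k+1) / (k+1).factorial := by
          have hrw : (fun s : ℝ => ‖B‖ * ((‖B‖ * s) ^ k / k.factorial))
              = fun s : ℝ => (‖B‖ ^ (k+1) / k.factorial) * s ^ k := by
            funext s; rw [mul_pow]; ring
          rw [hrw, intervalIntegral.integral_const_mul, integral_pow]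
          have hk : (k.factorial : ℝ) ≠ 0 := Nat.cast_ne_zero.mpr k.factorial_ne_zero
          have hk1 : ((k:ℝ) + 1) ≠ 0 := by positivity
          rw [Nat.factorial_succ, mul_pow]
          push_cast
          field_simp
          ring_nf
          try simp
          try exact Or.inl trivial

end DysonAux

theorem stmt7 (n : ℕ) (A B : Matrix (Fin n) (Fin n) ℂ)
    (hA : A.IsHermitian) (hB : B.IsHermitian) (T : ℝ) (hT : 0 ≤ T) :
    (∀ m : ℕ, ‖dysonTerm A B T m‖ ≤ (‖B‖ * T) ^ m / m.factorial)
    ∧ Summable (fun m : ℕ => ‖(-Complex.I) ^ m • dysonTerm A B T m‖)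
    ∧ NormedSpace.exp ((Complex.I * (T : ℂ)) • A) *
          NormedSpace.exp ((-(Complex.I * (T : ℂ))) • (A + B))
        = ∑' m : ℕ, (-Complex.I) ^ m • dysonTerm A B T m := by
  have hbound : ∀ m : ℕ, ‖dysonTerm A B T m‖ ≤ (‖B‖ * T) ^ m / m.factorial := by
    intro m
    rw [dysonTerm_eq_Dr A B m hT]
    exact norm_Dr_le A B hA m hT
  have hnormeq : ∀ m : ℕ, ‖(-Complex.I) ^ m • dysonTerm A B T m‖ = ‖dysonTerm A B T m‖ := by
    intro m
    rw [norm_smul, norm_pow, norm_neg, Complex.norm_I, one_pow, one_mul]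
  have hsummable : Summable (fun m : ℕ => ‖(-Complex.I) ^ m • dysonTerm A B T m‖) := by
    refine Summable.of_nonneg_of_le (fun m => norm_nonneg _) (fun m => ?_)
      (Real.summable_pow_div_factorial (‖B‖ * T))
    rw [hnormeq m]
    exact hbound m
  refine ⟨hbound, hsummable, ?_⟩
  have hsum : Summable (fun m : ℕ => (-Complex.I) ^ m • dysonTerm A B T m) :=
    Summable.of_norm hsummable
  have heq : ∀ k : ℕ, (∑ m ∈ Finset.range k, (-Complex.I) ^ m • dysonTerm A B T m)
      = Usol A B T - (-Complex.I) ^ k • Er A B k T := by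
    intro k
    have h := Usol_partial A B k T
    have hDr : ∀ m, dysonTerm A B T m = Dr A B m T := fun m => dysonTerm_eq_Dr A B m hT
    simp_rw [hDr]
    exact eq_sub_of_add_eq h.symm
  have htendsto : Filter.Tendsto
      (fun k => ∑ m ∈ Finset.range k, (-Complex.I) ^ m • dysonTerm A B T m)
      Filter.atTop (nhds (Usol A B T)) := by
    simp_rw [heq]
    have hzero : Filter.Tendsto (fun k : ℕ => (-Complex.I) ^ k • Er A B k T)
        Filter.atTop (nhds 0) := by
      have hb : ∀ k : ℕ, ‖(-Complex.I) ^ k • Er A B k T‖ ≤ (‖B‖ * T) ^ k / k.factorial := by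
        intro k
        rw [norm_smul, norm_pow, norm_neg, Complex.norm_I, one_pow, one_mul]
        exact norm_Er_le A B hA hB k hT
      exact squeeze_zero_norm hb (FloorSemiring.tendsto_pow_div_factorial_atTop (‖B‖ * T))
    simpa using Filter.Tendsto.sub (tendsto_const_nhds (x := Usol A B T)) hzero
  have h1 := hsum.hasSum.tendsto_sum_nat
  have h2 := tendsto_nhds_unique h1 htendsto
  show Usol A B T = _
  exact h2.symm
end
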